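/- Let T be an imprecise terrain and T' the terrain obtained from T by raising each lower bound low(v) to elev(M,v), where M is the realization computed by the sweep-plane minimum-removal algorithm (which, processing low- and high-events in increasing elevation order, finalizes pending components when they touch a finalized node or when a pending node reaches its upper bound). Then T' is a regular imprecise terrain. -/

import Mathlib

open scoped Classical
open Set

/-- An imprecise terrain: a finite geometric graph with nodes in the plane,
each node carrying an elevation interval `[low v, high v]`. -/
structure ImpTerrain (V : Type) [Fintype V] [DecidableEq V] where
  pos : V → ℝ × ℝ
  posInj : Function.Injective pos
  adj : V → V → Prop
  adj_symm : ∀ u v, adj u v → adj v u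
  adj_irrefl : ∀ v, ¬ adj v v
  low : V → ℝ
  high : V → ℝ

namespace ImpTerrain

variable {V : Type} [Fintype V] [DecidableEq V]

/-- A realization assigns to each node an elevation within its interval. -/
def IsRealization (T : ImpTerrain V) (R : V → ℝ) : Prop :=
  ∀ v, T.low v ≤ R v ∧ R v ≤ T.high v

/-- Horizontal (plane) distance between two nodes. -/
noncomputable def hdist (T : ImpTerrain V) (u v : V) : ℝ := dist (T.pos u) (T.pos v)

/-- Slope (steepness of descent) of the edge from `p` to `q` in realization `R`. -/
noncomputable def slope (T : ImpTerrain V) (R : V → ℝ) (p q : V) : ℝ :=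
  (R p - R q) / T.hdist p q

/-- `q` is a steepest-descent neighbor of `p` in `R`. -/
def SDN (T : ImpTerrain V) (R : V → ℝ) (p q : V) : Prop :=
  T.adj p q ∧ 0 ≤ T.slope R p q ∧ ∀ r, T.adj p r → T.slope R p r ≤ T.slope R p q

/-- The neighborhood of a set of nodes. -/
def Nbhd (T : ImpTerrain V) (P : Set V) : Set V :=
  {s | s ∉ P ∧ ∃ t ∈ P, T.adj s t}

/-- `u` and `v` are connected by a path staying inside `P`. -/
def ConnIn (T : ImpTerrain V) (P : Set V) (u v : V) : Prop :=
  Relation.ReflTransGen (fun a b => T.adj a b ∧ a ∈ P ∧ b ∈ P) u v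

/-- `P` is a local minimum in realization `R`: nonempty, connected, all nodes at
the same elevation, strictly below its neighborhood. -/
def LocalMin (T : ImpTerrain V) (R : V → ℝ) (P : Set V) : Prop :=
  P.Nonempty ∧ (∀ u ∈ P, ∀ v ∈ P, T.ConnIn P u v) ∧
    (∀ u ∈ P, ∀ v ∈ P, R u = R v) ∧ (∀ u ∈ P, ∀ t ∈ T.Nbhd P, R u < R t)

def InLocalMin (T : ImpTerrain V) (R : V → ℝ) (p : V) : Prop :=
  ∃ P, T.LocalMin R P ∧ p ∈ P

/-- One step of discrete water flow. -/
def FlowStep (T : ImpTerrain V) (R : V → ℝ) (p q : V) : Prop :=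
  (∃ P, T.LocalMin R P ∧ p ∈ P ∧ q ∈ P ∧ T.adj p q) ∨
    (¬ T.InLocalMin R p ∧ T.SDN R p q)

/-- `p ⇝_R q` : water from `p` reaches `q` in realization `R`. -/
def FlowsTo (T : ImpTerrain V) (R : V → ℝ) : V → V → Prop :=
  Relation.ReflTransGen (T.FlowStep R)

/-- The (discrete) watershed of a set of nodes `Q` in realization `R`. -/
def WS (T : ImpTerrain V) (R : V → ℝ) (Q : Set V) : Set V :=
  {p | ∃ q ∈ Q, T.FlowsTo R p q}

/-- The potential watershed of `Q`. -/
def PoWS (T : ImpTerrain V) (Q : Set V) : Set V :=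
  {p | ∃ R, T.IsRealization R ∧ p ∈ T.WS R Q}

/-- A flow path: a simple path following steepest-descent edges that ends in,
and visits all nodes of, a local minimum. -/
def IsFlowPath (T : ImpTerrain V) (R : V → ℝ) (L : List V) : Prop :=
  L.Nodup ∧ L.Chain' (fun p q => T.SDN R p q) ∧
    ∃ P, T.LocalMin R P ∧ (∀ v ∈ P, v ∈ L) ∧ ∃ hne : L ≠ [], L.getLast hne ∈ P

/-- The `Q`-avoiding potential watershed of `S`: nodes having, in some
realization, a flow path to a node of `S` whose portion up to that node
avoids `Q`. -/
def AvWS (T : ImpTerrain V) (Q S : Set V) : Set V :=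
  {p | ∃ R, T.IsRealization R ∧ ∃ L, T.IsFlowPath R L ∧ ∃ s ∈ S,
    ∃ i j : Fin L.length, (i : ℕ) ≤ (j : ℕ) ∧ L.get i = p ∧ L.get j = s ∧
      ∀ k : Fin L.length, (i : ℕ) ≤ (k : ℕ) → (k : ℕ) ≤ (j : ℕ) → L.get k ∉ Q}

/-- The persistent watershed of `Q`. -/
def PsWS (T : ImpTerrain V) (Q : Set V) : Set V :=
  (T.AvWS Q (T.PoWS Q)ᶜ)ᶜ

/-- The core watershed of `Q`: nodes from which every induced flow path leads
to a node of `Q`. -/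
def CoWS (T : ImpTerrain V) (Q : Set V) : Set V :=
  {p | ∀ R, T.IsRealization R → ∀ L, T.IsFlowPath R L →
    ∀ i : Fin L.length, L.get i = p →
      ∃ q ∈ Q, ∃ j : Fin L.length, (i : ℕ) ≤ (j : ℕ) ∧ L.get j = q}

/-- Union of all node sets disjoint from `Q` that form a local minimum in some
realization. -/
def Vmin (T : ImpTerrain V) (Q : Set V) : Set V :=
  ⋃₀ {r | r ∩ Q = ∅ ∧ ∃ R, T.IsRealization R ∧ T.LocalMin R r}

/-- `S` contains a local minimum in every realization. -/
def AlwaysMin (T : ImpTerrain V) (S : Set V) : Prop :=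
  ∀ R, T.IsRealization R → ∃ P, T.LocalMin R P ∧ P ⊆ S

/-- An imprecise minimum: a minimal set containing a local minimum in every
realization. -/
def ImpreciseMin (T : ImpTerrain V) (S : Set V) : Prop :=
  T.AlwaysMin S ∧ ∀ S', S' ⊂ S → ¬ T.AlwaysMin S'

/-- A terrain is regular if every local minimum of the lowermost realization is
an imprecise minimum. -/
def Regular (T : ImpTerrain V) : Prop :=
  ∀ P, T.LocalMin T.low P → T.ImpreciseMin P

/-- A proxy of `S`: a node of `S` from which water can never reach a node
outside `S` in any realization. -/
def IsProxy (T : ImpTerrain V) (S : Set V) (p : V) : Prop :=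
  p ∈ S ∧ ∀ R, T.IsRealization R → ∀ q, q ∉ S → ¬ T.FlowsTo R p q

/-- `R'` is an `ε`-perturbation of `R`. -/
def Perturb (ε : ℝ) (R R' : V → ℝ) : Prop := ∀ v, |R' v - R v| ≤ ε

/-- `S` together with all `ε`-perturbations of its members (`S^ε`). -/
def Enlarge (S : Set (V → ℝ)) (ε : ℝ) : Set (V → ℝ) :=
  S ∪ {R' | ∃ R ∈ S, Perturb ε R R'}

/-- `Π(S)` : flow paths induced by realizations in `S`. -/
def FlowPathsOf (T : ImpTerrain V) (S : Set (V → ℝ)) : Set (List V) :=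
  {L | ∃ R ∈ S, T.IsFlowPath R L}

/-- A flow path is stable with respect to `S`. -/
def StableWrt (T : ImpTerrain V) (S : Set (V → ℝ)) (L : List V) : Prop :=
  ∃ ε > (0 : ℝ), ∃ R ∈ S, ∀ R', Perturb ε R R' → T.IsFlowPath R' L

/-- State of the sweep-plane minimum-removal algorithm. -/
structure SweepState (V : Type) where
  discovered : Set V
  final : V → Option ℝ
  proxies : Set V

def pendingS (st : SweepState V) (v : V) : Prop :=
  v ∈ st.discovered ∧ st.final v = none

/-- Pending component of `v`. -/
def pendComp (T : ImpTerrain V) (st : SweepState V) (v : V) : Set V :=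
  {u | Relation.ReflTransGen (fun a b => T.adj a b ∧ pendingS st a ∧ pendingS st b) v u}

/-- One step of the sweep algorithm, processing a `low` event `(v, false)` or a
`high` event `(v, true)`. -/
noncomputable def sweepStep (T : ImpTerrain V) (st : SweepState V) : V × Bool → SweepState V
  | (v, false) =>
    let st1 : SweepState V := ⟨insert v st.discovered, st.final, st.proxies⟩
    if ∃ u, T.adj v u ∧ (st.final u).isSome = true then
      ⟨st1.discovered,
        fun w => if w ∈ T.pendComp st1 v then some (T.low v) else st.final w,
        st.proxies⟩
    else st1
  | (v, true) =>
    if (st.final v).isSome = true then st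
    else
      ⟨st.discovered,
        fun w =>
          if w ∈ T.pendComp st v then some (sSup (T.low '' T.pendComp st v))
          else st.final w,
        insert v st.proxies⟩

noncomputable def sweepRun (T : ImpTerrain V) (evs : List (V × Bool)) : SweepState V :=
  evs.foldl T.sweepStep ⟨∅, fun _ => none, ∅⟩

/-- Elevation key of an event. -/
def eKey (T : ImpTerrain V) : V × Bool → ℝ
  | (v, false) => T.low v
  | (v, true) => T.high v

/-- A valid event list: all events, each once, sorted by elevation with low
events before high events at equal elevation. -/
def ValidEventList (T : ImpTerrain V) (evs : List (V × Bool)) : Prop :=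
  (∀ v : V, ∀ b : Bool, (v, b) ∈ evs) ∧ evs.Nodup ∧
    evs.Pairwise (fun e1 e2 =>
      T.eKey e1 < T.eKey e2 ∨ (T.eKey e1 = T.eKey e2 ∧ ¬(e1.2 = true ∧ e2.2 = false)))

/-- The realization `M` computed by the sweep algorithm. -/
noncomputable def sweepM (T : ImpTerrain V) (evs : List (V × Bool)) : V → ℝ :=
  fun v => ((T.sweepRun evs).final v).getD (T.high v)


section AuxProof
variable {T : ImpTerrain V}

@[simp] lemma eKey_false (v : V) : T.eKey (v, false) = T.low v := rfl
@[simp] lemma eKey_true (v : V) : T.eKey (v, true) = T.high v := rfl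

/-- Plateau reachability with respect to a final assignment `f` at value `x`. -/
def PRel (T : ImpTerrain V) (f : V → Option ℝ) (x : ℝ) (v a : V) : Prop :=
  Relation.ReflTransGen (fun a b => T.adj a b ∧ f a = some x ∧ f b = some x) v a

lemma PRel.refl {f : V → Option ℝ} {x : ℝ} {v : V} : T.PRel f x v v :=
  Relation.ReflTransGen.refl

lemma PRel.rev {f : V → Option ℝ} {x : ℝ} {v a : V} (h : T.PRel f x v a) :
    T.PRel f x a v :=
  @Std.Symm.symm _ _ (@Relation.ReflTransGen.stdSymm _ _
    ⟨fun p q hpq => ⟨T.adj_symm _ _ hpq.1, hpq.2.2, hpq.2.1⟩⟩) _ _ h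

lemma PRel.trans' {f : V → Option ℝ} {x : ℝ} {v a b : V} (h : T.PRel f x v a)
    (h2 : T.PRel f x a b) : T.PRel f x v b :=
  Relation.ReflTransGen.trans h h2

lemma PRel.some_of {f : V → Option ℝ} {x : ℝ} {v a : V} (hv : f v = some x)
    (h : T.PRel f x v a) : f a = some x := by
  induction h with
  | refl => exact hv
  | tail _ hst _ => exact hst.2.2

lemma PRel.mono' {f g : V → Option ℝ} {x : ℝ} {v a : V}
    (hfg : ∀ u, f u = some x → g u = some x) (h : T.PRel f x v a) : T.PRel g x v a :=
  Relation.ReflTransGen.mono (fun p q hpq => ⟨hpq.1, hfg _ hpq.2.1, hfg _ hpq.2.2⟩) _ _ h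

lemma pendComp_pending {st : SweepState V} {v : V} (hv : pendingS st v) :
    ∀ u ∈ T.pendComp st v, pendingS st u := by
  intro u hu
  have hu' : Relation.ReflTransGen
      (fun a b => T.adj a b ∧ pendingS st a ∧ pendingS st b) v u := hu
  induction hu' with
  | refl => exact hv
  | tail _ hst _ => exact hst.2.2

lemma pendComp_closed {st : SweepState V} {v u t : V} (hv : pendingS st v)
    (hu : u ∈ T.pendComp st v) (hadj : T.adj u t) (ht : pendingS st t) :
    t ∈ T.pendComp st v := by
  have hu' : Relation.ReflTransGen
      (fun a b => T.adj a b ∧ pendingS st a ∧ pendingS st b) v u := hu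
  exact hu'.tail ⟨hadj, pendComp_pending hv u hu, ht⟩

lemma pendComp_PRel {st : SweepState V} {g : V → Option ℝ} {x : ℝ} {v u : V}
    (hg : ∀ w ∈ T.pendComp st v, g w = some x) (hu : u ∈ T.pendComp st v) :
    T.PRel g x v u := by
  have hu' : Relation.ReflTransGen
      (fun a b => T.adj a b ∧ pendingS st a ∧ pendingS st b) v u := hu
  induction hu' with
  | refl => exact PRel.refl
  | @tail b c hvb hst ih =>
      exact Relation.ReflTransGen.tail (ih hvb)
        ⟨hst.1, hg b hvb, hg c (Relation.ReflTransGen.tail hvb hst)⟩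

/-- The sweep invariant, for a state reached after processing prefix `p`,
with remaining suffix `r`. -/
structure Inv (T : ImpTerrain V) (p r : List (V × Bool)) (st : SweepState V) : Prop where
  disc : ∀ v, v ∈ st.discovered ↔ (v, false) ∈ p
  some_disc : ∀ v, st.final v ≠ none → v ∈ st.discovered
  true_some : ∀ v, (v, true) ∈ p → st.final v ≠ none
  bounds : ∀ v x, st.final v = some x → T.low v ≤ x ∧ x ≤ T.high v
  le_rest : ∀ v x, st.final v = some x → ∀ e ∈ r, x ≤ T.eKey e
  nopend : ∀ u t, st.final u ≠ none → T.adj u t → st.final t = none → t ∉ st.discovered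
  star : ∀ v x, st.final v = some x →
      (∃ a t y, T.PRel st.final x v a ∧ T.adj a t ∧ st.final t = some y ∧ y < x)
    ∨ (∃ w, T.PRel st.final x v w ∧ x ≤ T.high w ∧ (w, true) ∈ p ∧
        ∀ a t y, T.PRel st.final x v a → T.adj a t → st.final t = some y → x < y →
          T.high w < T.low t)

lemma inv_step (hle : ∀ v, T.low v ≤ T.high v) {evs p r : List (V × Bool)} {e : V × Bool}
    (hv : T.ValidEventList evs) (hsplit : evs = p ++ e :: r)
    {st : SweepState V} (h : Inv T p (e :: r) st) :
    Inv T (p ++ [e]) r (T.sweepStep st e) := by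
  obtain ⟨hall, hnd, hpw⟩ := hv
  rw [hsplit] at hnd hpw
  rw [List.pairwise_append] at hpw
  obtain ⟨-, hpw2, hcross⟩ := hpw
  rw [List.nodup_append] at hnd
  obtain ⟨-, hnd2, hdisj⟩ := hnd
  have hHead : ∀ e2 ∈ r, T.eKey e < T.eKey e2 ∨
      (T.eKey e = T.eKey e2 ∧ ¬(e.2 = true ∧ e2.2 = false)) :=
    (List.pairwise_cons.mp hpw2).1
  have hmem3 : ∀ (w : V) (b : Bool), (w, b) ∈ p ∨ (w, b) = e ∨ (w, b) ∈ r := by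
    intro w b
    have := hall w b
    rw [hsplit, List.mem_append, List.mem_cons] at this
    tauto
  have heP : e ∉ p := fun hp => hdisj _ hp _ List.mem_cons_self rfl
  obtain ⟨v, b⟩ := e
  cases b
  · -- ===================== low event =====================
    have hvD : v ∉ st.discovered := fun hD => heP ((h.disc v).1 hD)
    have hfv : st.final v = none := by
      cases hfveq : st.final v with
      | none => rfl
      | some y => exact absurd (h.some_disc v (by rw [hfveq]; simp)) hvD
    have hstep : T.sweepStep st (v, false) =
        if ∃ u, T.adj v u ∧ (st.final u).isSome = true then
          (⟨insert v st.discovered,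
            fun w => if w ∈ T.pendComp (⟨insert v st.discovered, st.final, st.proxies⟩ :
                SweepState V) v
              then some (T.low v) else st.final w,
            st.proxies⟩ : SweepState V)
        else (⟨insert v st.discovered, st.final, st.proxies⟩ : SweepState V) := rfl
    have hWlt : ∀ w, (w, true) ∈ p → T.high w < T.low v := by
      intro w hw
      have := hcross _ hw _ (List.mem_cons_self)
      simp only [eKey_true, eKey_false] at this
      rcases this with h1 | h2
      · exact h1
      · exact (h2.2 (by simp)).elim
    have hlowle : ∀ w, (w, false) ∈ p → T.low w ≤ T.low v := by
      intro w hw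
      have := hcross _ hw _ (List.mem_cons_self)
      simp only [eKey_false] at this
      rcases this with h1 | h2
      · exact le_of_lt h1
      · exact le_of_eq h2.1
    have hhighge : ∀ w, st.final w = none → T.low v ≤ T.high w := by
      intro w hw
      have hwt : (w, true) ∉ p := fun hp => (h.true_some w hp) hw
      have hwr : (w, true) ∈ r := by
        rcases hmem3 w true with h1 | h1 | h1
        · exact absurd h1 hwt
        · exact absurd h1 (by simp)
        · exact h1
      have := hHead _ hwr
      simp only [eKey_false, eKey_true] at this
      rcases this with h1 | h2
      · exact le_of_lt h1
      · exact le_of_eq h2.1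
    by_cases hC : ∃ u, T.adj v u ∧ (st.final u).isSome = true
    · rw [hstep, if_pos hC]
      have hpend1 : pendingS (⟨insert v st.discovered, st.final, st.proxies⟩ :
          SweepState V) v := ⟨Set.mem_insert _ _, hfv⟩
      set st1 : SweepState V := ⟨insert v st.discovered, st.final, st.proxies⟩ with hst1
      set K := T.pendComp st1 v with hKdef
      have hKpend : ∀ u ∈ K, u ∈ insert v st.discovered ∧ st.final u = none :=
        fun u hu => pendComp_pending hpend1 u hu
      have hKnone : ∀ u ∈ K, st.final u = none := fun u hu => (hKpend u hu).2
      have hvK : v ∈ K := Relation.ReflTransGen.refl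
      set g : V → Option ℝ :=
        (fun w => if w ∈ K then some (T.low v) else st.final w) with hgdef
      have hgK : ∀ w ∈ K, g w = some (T.low v) := fun w hw => if_pos hw
      have hgne : ∀ w, w ∉ K → g w = st.final w := fun w hw => if_neg hw
      have hgsome : ∀ w xx, st.final w = some xx → g w = some xx := by
        intro w xx hw
        have hwK : w ∉ K := fun hk => by
          rw [hKnone w hk] at hw; exact absurd hw (by simp)
        rw [hgne w hwK]; exact hw
      have hgcases : ∀ w xx, g w = some xx →
          (w ∈ K ∧ xx = T.low v) ∨ (w ∉ K ∧ st.final w = some xx) := by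
        intro w xx hw
        by_cases hwK : w ∈ K
        · exact Or.inl ⟨hwK, (Option.some.inj ((hgK w hwK).symm.trans hw)).symm⟩
        · exact Or.inr ⟨hwK, by rwa [hgne w hwK] at hw⟩
      refine ⟨?_, ?_, ?_, ?_, ?_, ?_, ?_⟩
      · -- disc
        intro w
        show w ∈ insert v st.discovered ↔ _
        rw [Set.mem_insert_iff, List.mem_append, h.disc w]
        constructor
        · rintro (rfl | hD)
          · exact Or.inr (by simp)
          · exact Or.inl hD
        · rintro (hp | hsingle)
          · exact Or.inr hp
          · exact Or.inl (by simpa using hsingle)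
      · -- some_disc
        intro w hw
        by_cases hwK : w ∈ K
        · exact (hKpend w hwK).1
        · have hw' : g w ≠ none := hw
          rw [hgne w hwK] at hw'
          exact Set.mem_insert_of_mem _ (h.some_disc w hw')
      · -- true_some
        intro w hw
        have hwp : (w, true) ∈ p := by
          rcases List.mem_append.mp hw with h1 | h1
          · exact h1
          · exact absurd h1 (by simp)
        have hne := h.true_some w hwp
        show g w ≠ none
        cases hfw : st.final w with
        | none => exact absurd hfw hne
        | some y => rw [hgsome w y hfw]; simp
      · -- bounds
        intro w x hw
        rcases hgcases w x hw with ⟨hwK, rfl⟩ | ⟨-, hfw⟩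
        · constructor
          · rcases Set.mem_insert_iff.mp (hKpend w hwK).1 with rfl | hD
            · exact le_refl _
            · exact hlowle w ((h.disc w).1 hD)
          · exact hhighge w (hKnone w hwK)
        · exact h.bounds w x hfw
      · -- le_rest
        intro w x hw e2 he2
        rcases hgcases w x hw with ⟨hwK, rfl⟩ | ⟨-, hfw⟩
        · have := hHead e2 he2
          simp only [eKey_false] at this
          rcases this with h1 | h2
          · exact le_of_lt h1
          · exact le_of_eq h2.1
        · exact h.le_rest w x hfw e2 (List.mem_cons_of_mem _ he2)
      · -- nopend
        intro u t hu ht hft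
        have hu0 : g u ≠ none := hu
        have hft0 : g t = none := hft
        have htK : t ∉ K := fun hk => by
          rw [hgK t hk] at hft0; exact absurd hft0 (by simp)
        have hft' : st.final t = none := by rw [← hgne t htK]; exact hft0
        by_cases huK : u ∈ K
        · intro htD'
          exact htK (pendComp_closed hpend1 huK ht ⟨htD', hft'⟩)
        · have hu' : st.final u ≠ none := by rw [← hgne u huK]; exact hu0
          have hnot := h.nopend u t hu' ht hft'
          intro htD'
          rcases Set.mem_insert_iff.mp htD' with rfl | hD
          · exact htK hvK
          · exact hnot hD
      · -- star
        intro v0 x hv0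
        rcases hgcases v0 x hv0 with ⟨hv0K, rfl⟩ | ⟨hv0K, hfv0⟩
        · -- newly finalized node
          obtain ⟨u0, hadju0, hsu0⟩ := hC
          obtain ⟨y', hfu0⟩ := Option.isSome_iff_exists.mp hsu0
          have hy'le : y' ≤ T.low v := by
            have := h.le_rest u0 y' hfu0 (v, false) (List.mem_cons_self)
            simpa using this
          have hPRv : T.PRel g (T.low v) v0 v :=
            (pendComp_PRel (fun w hw => hgK w hw) hv0K).rev
          rcases lt_or_eq_of_le hy'le with hlt | heq
          · exact Or.inl ⟨v, u0, y', hPRv, hadju0, hgsome u0 y' hfu0, hlt⟩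
          · rw [heq] at hfu0
            rcases h.star u0 (T.low v) hfu0 with
              ⟨a, t, yy, hpra, hat, hft, hyy⟩ | ⟨w, hprw, hxw, hwp, -⟩
            · refine Or.inl ⟨a, t, yy, ?_, hat, hgsome t yy hft, hyy⟩
              refine hPRv.trans' ?_
              refine Relation.ReflTransGen.head ⟨hadju0, hgK v hvK, hgsome u0 _ hfu0⟩ ?_
              exact hpra.mono' (fun u_ hu_ => hgsome u_ _ hu_)
            · exact absurd hxw (not_le.mpr (hWlt w hwp))
        · -- previously finalized node
          rcases h.star v0 x hfv0 with
            ⟨a, t, y, hpra, hat, hft, hy⟩ | ⟨w, hprw, hxw, hwp, hinner⟩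
          · exact Or.inl ⟨a, t, y, hpra.mono' (fun u_ hu_ => hgsome u_ _ hu_), hat,
              hgsome t y hft, hy⟩
          · have hxlt : x < T.low v := lt_of_le_of_lt hxw (hWlt w hwp)
            have hstay : ∀ a, T.PRel g x v0 a → a ∉ K ∧ T.PRel st.final x v0 a := by
              intro a ha
              induction ha with
              | refl => exact ⟨hv0K, PRel.refl⟩
              | @tail b c' hb hst ih =>
                  obtain ⟨hbK, hpr⟩ := ih
                  have hfb : st.final b = some x := by rw [← hgne b hbK]; exact hst.2.1
                  have hcK : c' ∉ K := by
                    intro hck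
                    have := (hgK c' hck).symm.trans hst.2.2
                    exact absurd (Option.some.inj this) (ne_of_gt hxlt)
                  have hfc : st.final c' = some x := by rw [← hgne c' hcK]; exact hst.2.2
                  exact ⟨hcK, hpr.tail ⟨hst.1, hfb, hfc⟩⟩
            refine Or.inr ⟨w, hprw.mono' (fun u_ hu_ => hgsome u_ _ hu_), hxw,
              List.mem_append_left _ hwp, ?_⟩
            intro a t y hpra hat hgt hxy
            obtain ⟨haK, hpra'⟩ := hstay a hpra
            by_cases htK : t ∈ K
            · have hfa : st.final a = some x := PRel.some_of hfv0 hpra'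
              have hftn : st.final t = none := hKnone t htK
              have htD : t ∉ st.discovered :=
                h.nopend a t (by rw [hfa]; simp) hat hftn
              have htv : t = v := by
                rcases Set.mem_insert_iff.mp (hKpend t htK).1 with h1 | h1
                · exact h1
                · exact absurd h1 htD
              rw [htv]
              exact hWlt w hwp
            · have hft : st.final t = some y := by rw [← hgne t htK]; exact hgt
              exact hinner a t y hpra' hat hft hxy
    · rw [hstep, if_neg hC]
      refine ⟨?_, ?_, ?_, h.bounds, ?_, ?_, ?_⟩
      · intro w
        show w ∈ insert v st.discovered ↔ _
        rw [Set.mem_insert_iff, List.mem_append, h.disc w]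
        constructor
        · rintro (rfl | hD)
          · exact Or.inr (by simp)
          · exact Or.inl hD
        · rintro (hp | hsingle)
          · exact Or.inr hp
          · exact Or.inl (by simpa using hsingle)
      · intro w hw
        exact Set.mem_insert_of_mem _ (h.some_disc w hw)
      · intro w hw
        have hwp : (w, true) ∈ p := by
          rcases List.mem_append.mp hw with h1 | h1
          · exact h1
          · exact absurd h1 (by simp)
        exact h.true_some w hwp
      · intro w x hw e2 he2
        exact h.le_rest w x hw e2 (List.mem_cons_of_mem _ he2)
      · intro u t hu ht hft htD'
        rcases Set.mem_insert_iff.mp htD' with rfl | hD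
        · exact hC ⟨u, T.adj_symm u t ht, Option.isSome_iff_ne_none.mpr hu⟩
        · exact h.nopend u t hu ht hft hD
      · intro v0 x hv0
        rcases h.star v0 x hv0 with hdrain | ⟨w, hprw, hxw, hwp, hinner⟩
        · exact Or.inl hdrain
        · exact Or.inr ⟨w, hprw, hxw, List.mem_append_left _ hwp, hinner⟩
  · -- ===================== high event =====================
    have hstep : T.sweepStep st (v, true) =
        if (st.final v).isSome = true then st
        else (⟨st.discovered,
          fun w => if w ∈ T.pendComp st v then some (sSup (T.low '' T.pendComp st v))
            else st.final w,
          insert v st.proxies⟩ : SweepState V) := rfl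
    by_cases hS : (st.final v).isSome = true
    · rw [hstep, if_pos hS]
      refine ⟨?_, h.some_disc, ?_, h.bounds, ?_, h.nopend, ?_⟩
      · intro w
        rw [h.disc w, List.mem_append]
        simp
      · intro w hw
        rcases List.mem_append.mp hw with h1 | h1
        · exact h.true_some w h1
        · have hwv : w = v := by simpa using h1
          subst hwv
          exact Option.isSome_iff_ne_none.mp hS
      · intro w x hw e2 he2
        exact h.le_rest w x hw e2 (List.mem_cons_of_mem _ he2)
      · intro v0 x hv0
        rcases h.star v0 x hv0 with hdrain | ⟨w, hprw, hxw, hwp, hinner⟩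
        · exact Or.inl hdrain
        · exact Or.inr ⟨w, hprw, hxw, List.mem_append_left _ hwp, hinner⟩
    · rw [hstep, if_neg hS]
      have hfv : st.final v = none := by
        cases hfveq : st.final v with
        | none => rfl
        | some y => rw [hfveq] at hS; simp at hS
      have hvD : v ∈ st.discovered := by
        rcases hmem3 v false with h1 | h1 | h1
        · exact (h.disc v).2 h1
        · exact absurd h1 (by simp)
        · exfalso
          have := hHead _ h1
          simp only [eKey_true, eKey_false] at this
          rcases this with h2 | h2
          · exact absurd h2 (not_lt.mpr (hle v))
          · exact (h2.2 (by simp)).elim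
      have hpendv : pendingS st v := ⟨hvD, hfv⟩
      set K := T.pendComp st v with hKdef
      have hKpend : ∀ u ∈ K, u ∈ st.discovered ∧ st.final u = none :=
        fun u hu => pendComp_pending hpendv u hu
      have hKnone : ∀ u ∈ K, st.final u = none := fun u hu => (hKpend u hu).2
      have hKD : ∀ u ∈ K, u ∈ st.discovered := fun u hu => (hKpend u hu).1
      have hvK : v ∈ K := Relation.ReflTransGen.refl
      set c := sSup (T.low '' K) with hcdef
      set g : V → Option ℝ := (fun w => if w ∈ K then some c else st.final w) with hgdef
      have hbdd : BddAbove (T.low '' K) := (K.toFinite.image _).bddAbove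
      have hKne : (T.low '' K).Nonempty := ⟨T.low v, v, hvK, rfl⟩
      have hlec : ∀ u ∈ K, T.low u ≤ c := fun u hu => le_csSup hbdd ⟨u, hu, rfl⟩
      have hcle : ∀ z, (∀ u ∈ K, T.low u ≤ z) → c ≤ z := by
        intro z hz
        apply csSup_le hKne
        rintro b ⟨u, hu, rfl⟩
        exact hz u hu
      have hcross' : ∀ e1 ∈ p, ∀ e2 : V × Bool, (e2 = (v, true) ∨ e2 ∈ r) →
          T.eKey e1 < T.eKey e2 ∨
            (T.eKey e1 = T.eKey e2 ∧ ¬(e1.2 = true ∧ e2.2 = false)) := by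
        intro e1 h1 e2 h2
        rcases h2 with rfl | h2
        · exact hcross e1 h1 _ (List.mem_cons_self)
        · exact hcross e1 h1 _ (List.mem_cons_of_mem _ h2)
      have hKfalse : ∀ u ∈ K, (u, false) ∈ p := fun u hu => (h.disc u).1 (hKD u hu)
      have hKtrue_r : ∀ u ∈ K, ((u, true) : V × Bool) = (v, true) ∨ (u, true) ∈ r := by
        intro u hu
        rcases hmem3 u true with h1 | h1 | h1
        · exact absurd (hKnone u hu) (h.true_some u h1)
        · exact Or.inl h1
        · exact Or.inr h1
      have hhighc : ∀ u ∈ K, c ≤ T.high u := by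
        intro u hu
        apply hcle
        intro s hs
        have := hcross' (s, false) (hKfalse s hs) (u, true) (hKtrue_r u hu)
        simp only [eKey_false, eKey_true] at this
        rcases this with h1 | h1
        · exact le_of_lt h1
        · exact le_of_eq h1.1
      have hcrest : ∀ e2 ∈ r, c ≤ T.eKey e2 := by
        intro e2 he2
        apply hcle
        intro s hs
        have := hcross (s, false) (hKfalse s hs) e2 (List.mem_cons_of_mem _ he2)
        simp only [eKey_false] at this
        rcases this with h1 | h1
        · exact le_of_lt h1
        · exact le_of_eq h1.1
      have hnofin : ∀ a ∈ K, ∀ t, T.adj a t → st.final t ≠ none → False := by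
        intro a ha t hat hft
        exact h.nopend t a hft (T.adj_symm a t hat) (hKnone a ha) (hKD a ha)
      have hgK : ∀ w ∈ K, g w = some c := fun w hw => if_pos hw
      have hgne : ∀ w, w ∉ K → g w = st.final w := fun w hw => if_neg hw
      have hgsome : ∀ w xx, st.final w = some xx → g w = some xx := by
        intro w xx hw
        have hwK : w ∉ K := fun hk => by
          rw [hKnone w hk] at hw; exact absurd hw (by simp)
        rw [hgne w hwK]; exact hw
      have hgcases : ∀ w xx, g w = some xx →
          (w ∈ K ∧ xx = c) ∨ (w ∉ K ∧ st.final w = some xx) := by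
        intro w xx hw
        by_cases hwK : w ∈ K
        · exact Or.inl ⟨hwK, (Option.some.inj ((hgK w hwK).symm.trans hw)).symm⟩
        · exact Or.inr ⟨hwK, by rwa [hgne w hwK] at hw⟩
      refine ⟨?_, ?_, ?_, ?_, ?_, ?_, ?_⟩
      · intro w
        show w ∈ st.discovered ↔ _
        rw [h.disc w, List.mem_append]
        simp
      · intro w hw
        by_cases hwK : w ∈ K
        · exact hKD w hwK
        · have hw' : g w ≠ none := hw
          rw [hgne w hwK] at hw'
          exact h.some_disc w hw'
      · intro w hw
        show g w ≠ none
        rcases List.mem_append.mp hw with h1 | h1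
        · cases hfw : st.final w with
          | none => exact absurd hfw (h.true_some w h1)
          | some y => rw [hgsome w y hfw]; simp
        · have hwv : w = v := by simpa using h1
          subst hwv
          rw [hgK w hvK]; simp
      · intro w x hw
        rcases hgcases w x hw with ⟨hwK, rfl⟩ | ⟨-, hfw⟩
        · exact ⟨hlec w hwK, hhighc w hwK⟩
        · exact h.bounds w x hfw
      · intro w x hw e2 he2
        rcases hgcases w x hw with ⟨hwK, rfl⟩ | ⟨-, hfw⟩
        · exact hcrest e2 he2
        · exact h.le_rest w x hfw e2 (List.mem_cons_of_mem _ he2)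
      · intro u t hu ht hft
        have hu0 : g u ≠ none := hu
        have hft0 : g t = none := hft
        have htK : t ∉ K := fun hk => by
          rw [hgK t hk] at hft0; exact absurd hft0 (by simp)
        have hft' : st.final t = none := by rw [← hgne t htK]; exact hft0
        by_cases huK : u ∈ K
        · intro htD
          exact htK (pendComp_closed hpendv huK ht ⟨htD, hft'⟩)
        · have hu' : st.final u ≠ none := by rw [← hgne u huK]; exact hu0
          exact h.nopend u t hu' ht hft'
      · intro v0 x hv0
        rcases hgcases v0 x hv0 with ⟨hv0K, rfl⟩ | ⟨hv0K, hfv0⟩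
        · -- in the newly finalized component: witness v
          have hstayK : ∀ a, T.PRel g c v0 a → a ∈ K := by
            intro a ha
            induction ha with
            | refl => exact hv0K
            | @tail b c' hb hst ih =>
                by_cases hcK : c' ∈ K
                · exact hcK
                · exfalso
                  have hfc : st.final c' = some c := by rw [← hgne c' hcK]; exact hst.2.2
                  exact hnofin b ih c' hst.1 (by rw [hfc]; simp)
          refine Or.inr ⟨v, (pendComp_PRel (fun w hw => hgK w hw) hv0K).rev,
            hhighc v hvK, List.mem_append_right _ (by simp), ?_⟩
          intro a t y hpra hat hgt hxy
          have haK := hstayK a hpra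
          by_cases htK : t ∈ K
          · have hcy : some c = some y := (hgK t htK).symm.trans hgt
            exact absurd (Option.some.inj hcy) (ne_of_lt hxy)
          · exfalso
            have hft : st.final t = some y := by rw [← hgne t htK]; exact hgt
            exact hnofin a haK t hat (by rw [hft]; simp)
        · -- old node
          have hstay : ∀ a, T.PRel g x v0 a → a ∉ K ∧ T.PRel st.final x v0 a := by
            intro a ha
            induction ha with
            | refl => exact ⟨hv0K, PRel.refl⟩
            | @tail b c' hb hst ih =>
                obtain ⟨hbK, hpr⟩ := ih
                have hfb : st.final b = some x := by rw [← hgne b hbK]; exact hst.2.1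
                have hcK : c' ∉ K := by
                  intro hck
                  exact hnofin c' hck b (T.adj_symm _ _ hst.1) (by rw [hfb]; simp)
                have hfc : st.final c' = some x := by rw [← hgne c' hcK]; exact hst.2.2
                exact ⟨hcK, hpr.tail ⟨hst.1, hfb, hfc⟩⟩
          rcases h.star v0 x hfv0 with
            ⟨a, t, y, hpra, hat, hft, hy⟩ | ⟨w, hprw, hxw, hwp, hinner⟩
          · exact Or.inl ⟨a, t, y, hpra.mono' (fun u_ hu_ => hgsome u_ _ hu_), hat,
              hgsome t y hft, hy⟩
          · refine Or.inr ⟨w, hprw.mono' (fun u_ hu_ => hgsome u_ _ hu_), hxw,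
              List.mem_append_left _ hwp, ?_⟩
            intro a t y hpra hat hgt hxy
            obtain ⟨haK, hpra'⟩ := hstay a hpra
            by_cases htK : t ∈ K
            · exfalso
              have hfa : st.final a = some x := PRel.some_of hfv0 hpra'
              exact hnofin t htK a (T.adj_symm a t hat) (by rw [hfa]; simp)
            · have hft : st.final t = some y := by rw [← hgne t htK]; exact hgt
              exact hinner a t y hpra' hat hft hxy

lemma inv_run (hle : ∀ v, T.low v ≤ T.high v) {evs : List (V × Bool)}
    (hv : T.ValidEventList evs) :
    ∀ (r p : List (V × Bool)) (st : SweepState V), evs = p ++ r → Inv T p r st →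
      Inv T evs [] (List.foldl T.sweepStep st r) := by
  intro r
  induction r with
  | nil =>
      intro p st hsplit h
      rw [List.append_nil] at hsplit
      rw [hsplit]
      exact h
  | cons e r' ih =>
      intro p st hsplit h
      have h1 := inv_step hle hv hsplit h
      have h2 := ih (p ++ [e]) (T.sweepStep st e) (by rw [hsplit]; simp) h1
      exact h2

lemma inv_final (hle : ∀ v, T.low v ≤ T.high v) {evs : List (V × Bool)}
    (hv : T.ValidEventList evs) : Inv T evs [] (T.sweepRun evs) := by
  refine inv_run hle hv evs [] _ (by simp) ?_
  refine ⟨?_, ?_, ?_, ?_, ?_, ?_, ?_⟩ <;> simp [SweepState.final]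

lemma final_all_some (hle : ∀ v, T.low v ≤ T.high v) {evs : List (V × Bool)}
    (hv : T.ValidEventList evs) (u : V) : (T.sweepRun evs).final u ≠ none :=
  (inv_final hle hv).true_some u (hv.1 u true)

lemma sweepM_eq_of (hle : ∀ v, T.low v ≤ T.high v) {evs : List (V × Bool)}
    (hv : T.ValidEventList evs) {u : V} {y : ℝ}
    (h : (T.sweepRun evs).final u = some y) : T.sweepM evs u = y := by
  simp [sweepM, h]

lemma exists_sweep_some (hle : ∀ v, T.low v ≤ T.high v) {evs : List (V × Bool)}
    (hv : T.ValidEventList evs) (u : V) :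
    (T.sweepRun evs).final u = some (T.sweepM evs u) := by
  cases hfu : (T.sweepRun evs).final u with
  | none => exact absurd hfu (final_all_some hle hv u)
  | some y => rw [sweepM_eq_of hle hv hfu]

lemma low_le_sweepM (hle : ∀ v, T.low v ≤ T.high v) {evs : List (V × Bool)}
    (hv : T.ValidEventList evs) (u : V) : T.low u ≤ T.sweepM evs u :=
  ((inv_final hle hv).bounds u _ (exists_sweep_some hle hv u)).1

lemma sweepM_le_high (hle : ∀ v, T.low v ≤ T.high v) {evs : List (V × Bool)}
    (hv : T.ValidEventList evs) (u : V) : T.sweepM evs u ≤ T.high u :=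
  ((inv_final hle hv).bounds u _ (exists_sweep_some hle hv u)).2

/-- Every local minimum of the sweep realization contains a proxy `w` whose
upper bound lies strictly below the lower bound of every neighbor of the
minimum. -/
lemma proxy_of_localMin (hle : ∀ v, T.low v ≤ T.high v) {evs : List (V × Bool)}
    (hv : T.ValidEventList evs) {P : Set V}
    (hP : T.LocalMin (T.sweepM evs) P) :
    ∃ w ∈ P, ∀ t ∈ T.Nbhd P, T.high w < T.low t := by
  classical
  set M := T.sweepM evs with hM
  set f := (T.sweepRun evs).final with hf
  obtain ⟨⟨v, hvP⟩, hconn, hconst, hnb⟩ := hP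
  have hfsome : ∀ u, f u = some (M u) := fun u => exists_sweep_some hle hv u
  set x := M v with hx
  have hfvx : f v = some x := hfsome v
  -- plateau-reachable nodes are in P
  have hreach_P : ∀ u, T.PRel f x v u → u ∈ P := by
    intro u hu
    induction hu with
    | refl => exact hvP
    | @tail b c' hb hst ih =>
        by_cases hc : c' ∈ P
        · exact hc
        · exfalso
          have hMc : M c' = x := by
            have := hfsome c'
            rw [hst.2.2] at this
            exact (Option.some.inj this).symm
          have hMb : M b = x := hconst b ih v hvP
          have : M b < M c' := hnb b ih c' ⟨hc, b, ih, T.adj_symm _ _ hst.1⟩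
          rw [hMb, hMc] at this
          exact lt_irrefl _ this
  -- all of P is plateau-reachable
  have hP_reach : ∀ u ∈ P, T.PRel f x v u := by
    intro u hu
    have := hconn v hvP u hu
    refine Relation.ReflTransGen.mono ?_ _ _ this
    intro a b hab
    refine ⟨hab.1, ?_, ?_⟩
    · rw [hfsome a, hconst a hab.2.1 v hvP]
    · rw [hfsome b, hconst b hab.2.2 v hvP]
  rcases (inv_final hle hv).star v x hfvx with
    ⟨a, t, y, hpra, hat, hft, hy⟩ | ⟨w, hprw, hxw, -, hinner⟩
  · exfalso
    have haP := hreach_P a hpra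
    have hMt : M t = y := sweepM_eq_of hle hv hft
    have htP : t ∉ P := by
      intro htP
      have := hconst t htP v hvP
      rw [hMt] at this
      exact (ne_of_lt hy) this
    have := hnb a haP t ⟨htP, a, haP, T.adj_symm _ _ hat⟩
    rw [hconst a haP v hvP, hMt] at this
    exact absurd hy (not_lt.mpr (le_of_lt this))
  · refine ⟨w, hreach_P w hprw, ?_⟩
    intro t ht
    obtain ⟨htP, a, haP, hta⟩ := ht
    have hft : f t = some (M t) := hfsome t
    refine hinner a t (M t) (hP_reach a haP) (T.adj_symm _ _ hta) hft ?_
    have := hnb a haP t ⟨htP, a, haP, hta⟩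
    rwa [hconst a haP v hvP] at this

/-- Crossing the boundary of `Q` along a path in `P`. -/
lemma boundary_step {P Q : Set V} {q x : V}
    (hq : q ∈ Q) (hconn : T.ConnIn P q x) (hx : x ∉ Q) :
    ∃ a b, a ∈ Q ∧ b ∈ P ∧ b ∉ Q ∧ T.adj a b := by
  revert hx
  induction hconn with
  | refl => intro hx; exact absurd hq hx
  | @tail b c' hqb hst ih =>
      intro hc
      by_cases hbQ : b ∈ Q
      · exact ⟨b, c', hbQ, hst.2.2, hc, hst.1⟩
      · exact ih hbQ

end AuxProof

end ImpTerrain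

/-- Raising the lower bounds of an imprecise terrain to the realization `M`
computed by the sweep-plane minimum-removal algorithm yields a regular
imprecise terrain. -/
theorem stmt17 {V : Type} [Fintype V] [DecidableEq V] (T : ImpTerrain V)
    (hle : ∀ v, T.low v ≤ T.high v)
    (evs : List (V × Bool)) (hevs : T.ValidEventList evs) :
    ({ T with low := T.sweepM evs } : ImpTerrain V).Regular := by
  classical
  intro P hP
  have hP' : T.LocalMin (T.sweepM evs) P := hP
  obtain ⟨⟨v₀, hv₀P⟩, hconnP, hconstP, hnbP⟩ := hP'
  obtain ⟨w, hwP, hwt⟩ := ImpTerrain.proxy_of_localMin (T := T) hle hevs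
    (⟨⟨v₀, hv₀P⟩, hconnP, hconstP, hnbP⟩)
  refine ⟨?_, ?_⟩
  · -- AlwaysMin
    intro R hR
    have hR' : ∀ u, T.sweepM evs u ≤ R u ∧ R u ≤ T.high u := hR
    obtain ⟨u₀, hu₀P, hmin⟩ := Set.exists_min_image P R (Set.toFinite P) ⟨v₀, hv₀P⟩
    set rQ : V → V → Prop :=
      fun a b => T.adj a b ∧ (a ∈ P ∧ R a = R u₀) ∧ (b ∈ P ∧ R b = R u₀) with hrQ
    set Q : Set V := {u | Relation.ReflTransGen rQ u₀ u} with hQdef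
    have hu₀Q : u₀ ∈ Q := Relation.ReflTransGen.refl
    have hQP : ∀ u ∈ Q, u ∈ P ∧ R u = R u₀ := by
      intro u hu
      have hu' : Relation.ReflTransGen rQ u₀ u := hu
      induction hu' with
      | refl => exact ⟨hu₀P, rfl⟩
      | tail _ hst _ => exact hst.2.2
    have hsym : Symmetric rQ := fun a b hab => ⟨T.adj_symm _ _ hab.1, hab.2.2, hab.2.1⟩
    have hQc : ∀ a b, a ∈ Q → Relation.ReflTransGen rQ a b → b ∈ Q := by
      intro a b ha hab
      exact Relation.ReflTransGen.trans ha hab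
    have hconnQ : ∀ a b, Relation.ReflTransGen rQ a b → a ∈ Q → T.ConnIn Q a b := by
      intro a b hab
      induction hab with
      | refl => intro _; exact Relation.ReflTransGen.refl
      | @tail b' c' h1 hst ih =>
          intro ha
          exact (ih ha).tail ⟨hst.1, hQc _ _ ha h1, hQc _ _ ha (h1.tail hst)⟩
    have hQloc : T.LocalMin R Q := by
      refine ⟨⟨u₀, hu₀Q⟩, ?_, ?_, ?_⟩
      · intro u hu u' hu'
        have h1 : Relation.ReflTransGen rQ u u₀ := @Std.Symm.symm _ _ (@Relation.ReflTransGen.stdSymm _ _ ⟨hsym⟩) _ _ hu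
        exact hconnQ u u' (h1.trans hu') hu
      · intro u hu u' hu'
        rw [(hQP u hu).2, (hQP u' hu').2]
      · intro u hu t htn
        obtain ⟨htQ, s, hsQ, hts⟩ := htn
        rw [(hQP u hu).2]
        by_cases htP : t ∈ P
        · rcases lt_or_eq_of_le (hmin t htP) with hlt | heq
          · exact hlt
          · exfalso
            refine htQ (hQc _ _ hsQ (Relation.ReflTransGen.single ?_))
            exact ⟨T.adj_symm _ _ hts, ⟨(hQP s hsQ).1, (hQP s hsQ).2⟩, ⟨htP, heq.symm⟩⟩
        · have htNb : t ∈ T.Nbhd P := ⟨htP, s, (hQP s hsQ).1, hts⟩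
          have h1 : R u₀ ≤ R w := hmin w hwP
          have h2 : R w ≤ T.high w := (hR' w).2
          have h3 : T.high w < T.low t := hwt t htNb
          have h4 : T.low t ≤ T.sweepM evs t := ImpTerrain.low_le_sweepM hle hevs t
          have h5 : T.sweepM evs t ≤ R t := (hR' t).1
          linarith
    exact ⟨Q, hQloc, fun u hu => (hQP u hu).1⟩
  · -- minimality
    intro S' hS' hAM
    have hMreal : ({ T with low := T.sweepM evs } : ImpTerrain V).IsRealization
        (T.sweepM evs) :=
      fun u => ⟨le_refl _, ImpTerrain.sweepM_le_high hle hevs u⟩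
    obtain ⟨Q, hQ, hQS⟩ := hAM (T.sweepM evs) hMreal
    have hQ' : T.LocalMin (T.sweepM evs) Q := hQ
    obtain ⟨⟨q, hq⟩, -, -, hnbQ⟩ := hQ'
    obtain ⟨x, hxP, hxS⟩ := Set.exists_of_ssubset hS'
    have hqP : q ∈ P := hS'.subset (hQS hq)
    have hxQ : x ∉ Q := fun hk => hxS (hQS hk)
    obtain ⟨a, b, haQ, hbP, hbQ, hab⟩ :=
      ImpTerrain.boundary_step hq (hconnP q hqP x hxP) hxQ
    have h1 : T.sweepM evs a < T.sweepM evs b :=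
      hnbQ a haQ b ⟨hbQ, a, haQ, T.adj_symm _ _ hab⟩
    have h2 : T.sweepM evs a = T.sweepM evs b :=
      hconstP a (hS'.subset (hQS haQ)) b hbP
    rw [h2] at h1
    exact lt_irrefl _ h1
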